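/- Let a, b, ε > 0 with a + ε < b. Then there exist C > 0 and δ₀ > 0 such that for every δ ∈ (0, δ₀] and every w ≥ 0: 2b ∫_{(b/(b−a−ε))w + 1/δ}^{∞} v e^{ε v²} e^{a v²} e^{−b v²} e^{−b w²} I₀(2 b v w) dv ≤ C e^{−(b−a−ε)/(4δ²)} · (b/(b−a−ε)) · exp( ((a+ε)b/(b−a−ε)) w² ). -/

import Mathlib

open MeasureTheory

/-- The modified Bessel function `I₀(y) = (1/π) ∫₀^π e^{y cos φ} dφ`. -/
noncomputable def besselI0 (y : ℝ) : ℝ :=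
  (1 / Real.pi) * ∫ φ in (0:ℝ)..Real.pi, Real.exp (y * Real.cos φ)

open Filter Topology Set

lemma besselI0_nonneg (y : ℝ) : 0 ≤ besselI0 y := by
  unfold besselI0
  apply mul_nonneg (by positivity)
  apply intervalIntegral.integral_nonneg Real.pi_pos.le
  intro x _; exact (Real.exp_pos _).le

lemma besselI0_le_exp {y : ℝ} (hy : 0 ≤ y) : besselI0 y ≤ Real.exp y := by
  unfold besselI0
  have h : (∫ φ in (0:ℝ)..Real.pi, Real.exp (y * Real.cos φ))
      ≤ ∫ _ in (0:ℝ)..Real.pi, Real.exp y := by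
    apply intervalIntegral.integral_mono_on Real.pi_pos.le
    · exact ((continuous_const.mul Real.continuous_cos).rexp).intervalIntegrable _ _
    · exact intervalIntegrable_const
    · intro x _
      exact Real.exp_le_exp.2 (by nlinarith [Real.cos_le_one x])
  rw [intervalIntegral.integral_const, smul_eq_mul, sub_zero] at h
  calc (1 / Real.pi) * (∫ φ in (0:ℝ)..Real.pi, Real.exp (y * Real.cos φ))
      ≤ (1 / Real.pi) * (Real.pi * Real.exp y) := by
        apply mul_le_mul_of_nonneg_left h (by positivity)
    _ = Real.exp y := by field_simp

lemma besselI0_le_exp_div_sqrt {y : ℝ} (hy : 0 < y) :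
    besselI0 y ≤ Real.exp y / Real.sqrt y := by
  unfold besselI0
  set α : ℝ := 2 * y / Real.pi ^ 2 with hα
  have hαpos : 0 < α := by positivity
  have hpt : ∀ φ ∈ Set.Icc (0:ℝ) Real.pi,
      Real.exp (y * Real.cos φ) ≤ Real.exp y * Real.exp (-α * φ ^ 2) := by
    intro φ hφ
    rw [← Real.exp_add]
    apply Real.exp_le_exp.2
    -- need : y * cos φ ≤ y - α φ²  i.e.  y (1 - cos φ) ≥ 2 y φ²/π²
    have hj : φ / Real.pi ≤ Real.sin (φ / 2) := by
      have := Real.mul_le_sin (x := φ / 2) (by linarith [hφ.1]) (by linarith [hφ.2])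
      calc φ / Real.pi = 2 / Real.pi * (φ / 2) := by
            field_simp
        _ ≤ Real.sin (φ / 2) := this
    have hcos : Real.cos φ = 1 - 2 * Real.sin (φ / 2) ^ 2 := by
      have h1 := Real.cos_two_mul (φ / 2)
      have h2 := Real.sin_sq_add_cos_sq (φ / 2)
      have : 2 * (φ / 2) = φ := by ring
      rw [this] at h1
      nlinarith
    have hφπ : 0 ≤ φ / Real.pi := div_nonneg hφ.1 Real.pi_pos.le
    have hsq : (φ / Real.pi) ^ 2 ≤ Real.sin (φ / 2) ^ 2 := by
      apply pow_le_pow_left₀ hφπ hj 2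
    have hππ : (0:ℝ) < Real.pi ^ 2 := by positivity
    have : α * φ ^ 2 ≤ y * (2 * Real.sin (φ / 2) ^ 2) := by
      rw [hα]
      rw [div_mul_eq_mul_div, div_le_iff₀ hππ]
      calc 2 * y * φ ^ 2 = y * (2 * (φ / Real.pi) ^ 2) * Real.pi ^ 2 := by
            field_simp
        _ ≤ y * (2 * Real.sin (φ / 2) ^ 2) * Real.pi ^ 2 := by
            apply mul_le_mul_of_nonneg_right _ hππ.le
            apply mul_le_mul_of_nonneg_left _ hy.le
            linarith
    nlinarith
  have hint : (∫ φ in (0:ℝ)..Real.pi, Real.exp (y * Real.cos φ))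
      ≤ ∫ φ in (0:ℝ)..Real.pi, Real.exp y * Real.exp (-α * φ ^ 2) := by
    apply intervalIntegral.integral_mono_on Real.pi_pos.le
    · exact ((continuous_const.mul Real.continuous_cos).rexp).intervalIntegrable _ _
    · exact (continuous_const.mul ((continuous_const.mul (continuous_pow 2)).rexp)).intervalIntegrable _ _
    · exact hpt
  have hgauss : (∫ φ in (0:ℝ)..Real.pi, Real.exp (-α * φ ^ 2))
      ≤ Real.sqrt (Real.pi / α) / 2 := by
    rw [intervalIntegral.integral_of_le Real.pi_pos.le]
    rw [← integral_gaussian_Ioi α]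
    apply setIntegral_mono_set ((integrable_exp_neg_mul_sq hαpos).integrableOn)
    · filter_upwards with x using (Real.exp_pos _).le
    · exact Filter.Eventually.of_forall (fun x hx => hx.1)
  have hbound : Real.sqrt (Real.pi / α) / 2 ≤ Real.pi / Real.sqrt y := by
    have hπ2 : (Real.pi:ℝ) ^ 2 ≠ 0 := by positivity
    have heq : Real.pi / α = Real.pi ^ 3 / (2 * y) := by
      rw [hα]; field_simp
    have h1 : Real.pi / α ≤ 4 * Real.pi ^ 2 / y := by
      rw [heq, div_le_div_iff₀ (by positivity) hy]
      have h8 : Real.pi ≤ 8 := by nlinarith [Real.pi_le_four]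
      have hh := mul_le_mul_of_nonneg_right h8 (show (0:ℝ) ≤ Real.pi ^ 2 * y by positivity)
      nlinarith [hh]
    have h2 : Real.sqrt (4 * Real.pi ^ 2 / y) = 2 * Real.pi / Real.sqrt y := by
      rw [show (4 : ℝ) * Real.pi ^ 2 / y = (2 * Real.pi) ^ 2 / y by ring]
      rw [Real.sqrt_div (by positivity) y, Real.sqrt_sq (by positivity)]
    calc Real.sqrt (Real.pi / α) / 2 ≤ Real.sqrt (4 * Real.pi ^ 2 / y) / 2 := by
          gcongr
      _ = Real.pi / Real.sqrt y := by rw [h2]; ring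
  calc (1 / Real.pi) * (∫ φ in (0:ℝ)..Real.pi, Real.exp (y * Real.cos φ))
      ≤ (1 / Real.pi) * (Real.exp y * (Real.sqrt (Real.pi / α) / 2)) := by
        apply mul_le_mul_of_nonneg_left _ (by positivity)
        calc (∫ φ in (0:ℝ)..Real.pi, Real.exp (y * Real.cos φ))
            ≤ ∫ φ in (0:ℝ)..Real.pi, Real.exp y * Real.exp (-α * φ ^ 2) := hint
          _ = Real.exp y * ∫ φ in (0:ℝ)..Real.pi, Real.exp (-α * φ ^ 2) := by
              rw [intervalIntegral.integral_const_mul]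
          _ ≤ Real.exp y * (Real.sqrt (Real.pi / α) / 2) := by
              apply mul_le_mul_of_nonneg_left hgauss (Real.exp_pos _).le
    _ ≤ (1 / Real.pi) * (Real.exp y * (Real.pi / Real.sqrt y)) := by
        apply mul_le_mul_of_nonneg_left _ (by positivity)
        exact mul_le_mul_of_nonneg_left hbound (Real.exp_pos _).le
    _ = Real.exp y / Real.sqrt y := by
        field_simp

/-- Tail estimate for the Gaussian–Bessel integral: for `a, b, ε > 0` with `a + ε < b`
there exist `C > 0` and `δ₀ > 0` such that for every `0 < δ ≤ δ₀` and every `w ≥ 0`,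
`2b ∫_{(b/(b−a−ε))w + 1/δ}^∞ v e^{εv²} e^{av²} e^{−bv²} e^{−bw²} I₀(2bvw) dv
  ≤ C e^{−(b−a−ε)/(4δ²)} · (b/(b−a−ε)) · exp(((a+ε)b/(b−a−ε)) w²)`. -/
theorem gaussian_bessel_integral_tail (a b ε : ℝ) (ha : 0 < a) (hb : 0 < b) (hε : 0 < ε)
    (hab : a + ε < b) :
    ∃ C > 0, ∃ δ₀ > 0, ∀ δ : ℝ, 0 < δ → δ ≤ δ₀ → ∀ w : ℝ, 0 ≤ w →
      2 * b * ∫ v in Set.Ioi ((b / (b - a - ε)) * w + 1 / δ),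
          v * Real.exp (ε * v ^ 2) * Real.exp (a * v ^ 2) * Real.exp (-b * v ^ 2) *
            Real.exp (-b * w ^ 2) * besselI0 (2 * b * v * w)
        ≤ C * Real.exp (-(b - a - ε) / (4 * δ ^ 2)) *
            ((b / (b - a - ε)) * Real.exp ((a + ε) * b / (b - a - ε) * w ^ 2)) := by
  have hc : 0 < b - a - ε := by linarith
  set c : ℝ := b - a - ε with hc_def
  have hcne : c ≠ 0 := hc.ne'
  set M : ℝ := 2 + (Real.sqrt c)⁻¹ with hM_def
  have hsc : 0 < Real.sqrt c := Real.sqrt_pos.2 hc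
  have hM0 : 0 < M := by positivity
  refine ⟨M, hM0, 1, one_pos, ?_⟩
  intro δ hδ hδ1 w hw
  set s : ℝ := b * w / c with hs_def
  set T : ℝ := b / c * w + 1 / δ with hT_def
  set B : ℝ := (a + ε) * b / c with hB_def
  have hsT : T = s + 1 / δ := by rw [hT_def, hs_def]; ring
  have hs0 : 0 ≤ s := by positivity
  have hδ1' : (1:ℝ) ≤ 1 / δ := by rw [le_div_iff₀ hδ]; linarith
  have hTs : s + 1 ≤ T := by rw [hsT]; linarith
  have hT0 : 0 < T := by rw [hsT]; positivity
  -- pointwise bound on the integrand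
  have key : ∀ v ∈ Set.Ioi T,
      v * Real.exp (ε * v ^ 2) * Real.exp (a * v ^ 2) * Real.exp (-b * v ^ 2) *
          Real.exp (-b * w ^ 2) * besselI0 (2 * b * v * w)
        ≤ M * Real.exp (B * w ^ 2) * ((v - s) * Real.exp (-c * (v - s) ^ 2)) := by
    intro v hv
    have hv' : T < v := hv
    have hv0 : 0 < v := hT0.trans hv'
    have hu1 : 1 ≤ v - s := by
      have := hTs.trans_lt hv'
      linarith
    have hu0 : 0 < v - s := by linarith
    have hy0 : 0 ≤ 2 * b * v * w := by positivity
    -- the exponent identity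
    have hE : Real.exp (ε * v ^ 2) * Real.exp (a * v ^ 2) * Real.exp (-b * v ^ 2) *
        Real.exp (-b * w ^ 2) * Real.exp (2 * b * v * w)
        = Real.exp (B * w ^ 2) * Real.exp (-c * (v - s) ^ 2) := by
      rw [← Real.exp_add, ← Real.exp_add, ← Real.exp_add, ← Real.exp_add, ← Real.exp_add]
      congr 1
      have hc3 : b - a - ε ≠ 0 := hcne
      rw [hs_def, hB_def, hc_def]
      field_simp
      ring
    rcases le_or_gt s (v - s) with hcase | hcase
    · -- moderate w : use I₀(y) ≤ e^y
      have hI := besselI0_le_exp hy0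
      calc v * Real.exp (ε * v ^ 2) * Real.exp (a * v ^ 2) * Real.exp (-b * v ^ 2) *
              Real.exp (-b * w ^ 2) * besselI0 (2 * b * v * w)
          ≤ v * Real.exp (ε * v ^ 2) * Real.exp (a * v ^ 2) * Real.exp (-b * v ^ 2) *
              Real.exp (-b * w ^ 2) * Real.exp (2 * b * v * w) := by
            apply mul_le_mul_of_nonneg_left hI (by positivity)
        _ = v * (Real.exp (ε * v ^ 2) * Real.exp (a * v ^ 2) * Real.exp (-b * v ^ 2) *
              Real.exp (-b * w ^ 2) * Real.exp (2 * b * v * w)) := by ring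
        _ = v * (Real.exp (B * w ^ 2) * Real.exp (-c * (v - s) ^ 2)) := by rw [hE]
        _ ≤ (2 * (v - s)) * (Real.exp (B * w ^ 2) * Real.exp (-c * (v - s) ^ 2)) := by
            apply mul_le_mul_of_nonneg_right (by linarith) (by positivity)
        _ = 2 * (Real.exp (B * w ^ 2) * ((v - s) * Real.exp (-c * (v - s) ^ 2))) := by ring
        _ ≤ M * (Real.exp (B * w ^ 2) * ((v - s) * Real.exp (-c * (v - s) ^ 2))) := by
            apply mul_le_mul_of_nonneg_right _ (by positivity)
            have h0 : 0 ≤ (Real.sqrt c)⁻¹ := by positivity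
            rw [hM_def]; linarith
        _ = M * Real.exp (B * w ^ 2) * ((v - s) * Real.exp (-c * (v - s) ^ 2)) := by ring
    · -- large w : use I₀(y) ≤ e^y/√y
      have hw0 : 0 < w := by
        by_contra h
        push_neg at h
        have hsle : s ≤ 0 := by
          rw [hs_def]
          apply div_nonpos_of_nonpos_of_nonneg (by nlinarith) hc.le
        linarith
      have hy0' : 0 < 2 * b * v * w := by positivity
      have hI := besselI0_le_exp_div_sqrt hy0'
      have hv2s : v < 2 * s := by linarith
      have hdiv : v / Real.sqrt (2 * b * v * w) ≤ (Real.sqrt c)⁻¹ := by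
        have hcv : c * v ≤ 2 * b * w := by
          calc c * v ≤ c * (2 * s) := by
                apply mul_le_mul_of_nonneg_left hv2s.le hc.le
            _ = 2 * b * w := by rw [hs_def]; field_simp
        have hv2y : v ^ 2 ≤ c⁻¹ * (2 * b * v * w) := by
          rw [le_inv_mul_iff₀ hc]
          calc c * v ^ 2 = v * (c * v) := by ring
            _ ≤ v * (2 * b * w) := by
                apply mul_le_mul_of_nonneg_left hcv hv0.le
            _ = 2 * b * v * w := by ring
        rw [div_le_iff₀ (Real.sqrt_pos.2 hy0')]
        rw [← Real.sqrt_inv, ← Real.sqrt_mul (by positivity : (0:ℝ) ≤ c⁻¹)]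
        exact (Real.le_sqrt hv0.le (by positivity)).2 hv2y
      calc v * Real.exp (ε * v ^ 2) * Real.exp (a * v ^ 2) * Real.exp (-b * v ^ 2) *
              Real.exp (-b * w ^ 2) * besselI0 (2 * b * v * w)
          ≤ v * Real.exp (ε * v ^ 2) * Real.exp (a * v ^ 2) * Real.exp (-b * v ^ 2) *
              Real.exp (-b * w ^ 2) * (Real.exp (2 * b * v * w) / Real.sqrt (2 * b * v * w)) := by
            apply mul_le_mul_of_nonneg_left hI (by positivity)
        _ = (v / Real.sqrt (2 * b * v * w)) * (Real.exp (ε * v ^ 2) * Real.exp (a * v ^ 2) *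
              Real.exp (-b * v ^ 2) * Real.exp (-b * w ^ 2) * Real.exp (2 * b * v * w)) := by
            ring
        _ = (v / Real.sqrt (2 * b * v * w)) *
              (Real.exp (B * w ^ 2) * Real.exp (-c * (v - s) ^ 2)) := by rw [hE]
        _ ≤ ((Real.sqrt c)⁻¹ * (v - s)) *
              (Real.exp (B * w ^ 2) * Real.exp (-c * (v - s) ^ 2)) := by
            apply mul_le_mul_of_nonneg_right _ (by positivity)
            calc v / Real.sqrt (2 * b * v * w) ≤ (Real.sqrt c)⁻¹ := hdiv
              _ = (Real.sqrt c)⁻¹ * 1 := by ring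
              _ ≤ (Real.sqrt c)⁻¹ * (v - s) := by
                  apply mul_le_mul_of_nonneg_left hu1 (by positivity)
        _ = (Real.sqrt c)⁻¹ * (Real.exp (B * w ^ 2) * ((v - s) * Real.exp (-c * (v - s) ^ 2))) := by
            ring
        _ ≤ M * (Real.exp (B * w ^ 2) * ((v - s) * Real.exp (-c * (v - s) ^ 2))) := by
            apply mul_le_mul_of_nonneg_right _ (by positivity)
            have h0 : 0 ≤ (Real.sqrt c)⁻¹ := by positivity
            rw [hM_def]; linarith
        _ = M * Real.exp (B * w ^ 2) * ((v - s) * Real.exp (-c * (v - s) ^ 2)) := by ring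
  -- integrability and value of the dominating integral
  have hg' : ∀ x ∈ Set.Ici T,
      HasDerivAt (fun x => -Real.exp (-c * (x - s) ^ 2) / (2 * c))
        ((x - s) * Real.exp (-c * (x - s) ^ 2)) x := by
    intro x _
    have h1 : HasDerivAt (fun x : ℝ => -c * (x - s) ^ 2) (-c * (2 * (x - s))) x := by
      have h0 := (((hasDerivAt_id x).sub_const s).pow 2).const_mul (-c)
      convert h0 using 1
      any_goals rfl
      simp
      try ring
    have h4 := (h1.exp.neg).div_const (2 * c)
    convert h4 using 1
    any_goals rfl
    field_simp
  have hg'nonneg : ∀ x ∈ Set.Ioi T, 0 ≤ (x - s) * Real.exp (-c * (x - s) ^ 2) := by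
    intro x hx
    have : s ≤ x := by
      have : T < x := hx
      linarith
    apply mul_nonneg (by linarith) (Real.exp_pos _).le
  have hgtend : Tendsto (fun x => -Real.exp (-c * (x - s) ^ 2) / (2 * c)) atTop (𝓝 0) := by
    have h1 : Tendsto (fun x : ℝ => -c * (x - s) ^ 2) atTop atBot := by
      have hsub : Tendsto (fun x : ℝ => x - s) atTop atTop := by
        simpa [sub_eq_add_neg] using tendsto_atTop_add_const_right atTop (-s) tendsto_id
      have hpow : Tendsto (fun x : ℝ => (x - s) ^ 2) atTop atTop :=
        (tendsto_pow_atTop two_ne_zero).comp hsub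
      exact (tendsto_const_mul_atBot_of_neg (by linarith : -c < 0)).2 hpow
    have h2 := (Real.tendsto_exp_atBot.comp h1).neg.div_const (2 * c)
    simpa using h2
  have hint : IntegrableOn (fun x => (x - s) * Real.exp (-c * (x - s) ^ 2)) (Set.Ioi T) :=
    integrableOn_Ioi_deriv_of_nonneg' hg' hg'nonneg hgtend
  have hval : ∫ x in Set.Ioi T, (x - s) * Real.exp (-c * (x - s) ^ 2)
      = Real.exp (-c * (1 / δ) ^ 2) / (2 * c) := by
    rw [integral_Ioi_of_hasDerivAt_of_nonneg' hg' hg'nonneg hgtend]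
    rw [hsT]
    ring_nf
  -- monotonicity of the integral
  have hmono : (∫ v in Set.Ioi T,
        v * Real.exp (ε * v ^ 2) * Real.exp (a * v ^ 2) * Real.exp (-b * v ^ 2) *
          Real.exp (-b * w ^ 2) * besselI0 (2 * b * v * w))
      ≤ ∫ v in Set.Ioi T,
          M * Real.exp (B * w ^ 2) * ((v - s) * Real.exp (-c * (v - s) ^ 2)) := by
    apply integral_mono_of_nonneg
    · filter_upwards [ae_restrict_mem measurableSet_Ioi] with v hv
      have hv0 : 0 < v := hT0.trans hv
      have := besselI0_nonneg (2 * b * v * w)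
      positivity
    · exact (hint.const_mul _)
    · filter_upwards [ae_restrict_mem measurableSet_Ioi] with v hv using key v hv
  have hconst : (∫ v in Set.Ioi T,
        M * Real.exp (B * w ^ 2) * ((v - s) * Real.exp (-c * (v - s) ^ 2)))
      = M * Real.exp (B * w ^ 2) * (Real.exp (-c * (1 / δ) ^ 2) / (2 * c)) := by
    rw [MeasureTheory.integral_const_mul, hval]
  -- final arithmetic
  have hexp : Real.exp (-c * (1 / δ) ^ 2) ≤ Real.exp (-c / (4 * δ ^ 2)) := by
    apply Real.exp_le_exp.2
    rw [show -c * (1 / δ) ^ 2 = -(c / δ ^ 2) by field_simp]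
    rw [show -c / (4 * δ ^ 2) = -(c / (4 * δ ^ 2)) by ring]
    apply neg_le_neg
    rw [div_le_div_iff₀ (by positivity) (by positivity)]
    nlinarith [sq_nonneg δ, hc.le]
  calc 2 * b * ∫ v in Set.Ioi T,
          v * Real.exp (ε * v ^ 2) * Real.exp (a * v ^ 2) * Real.exp (-b * v ^ 2) *
            Real.exp (-b * w ^ 2) * besselI0 (2 * b * v * w)
      ≤ 2 * b * (M * Real.exp (B * w ^ 2) * (Real.exp (-c * (1 / δ) ^ 2) / (2 * c))) := by
        apply mul_le_mul_of_nonneg_left _ (by positivity)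
        rw [← hconst]
        exact hmono
    _ = M * Real.exp (-c * (1 / δ) ^ 2) * (b / c * Real.exp (B * w ^ 2)) := by
        field_simp
    _ ≤ M * Real.exp (-c / (4 * δ ^ 2)) * (b / c * Real.exp (B * w ^ 2)) := by
        apply mul_le_mul_of_nonneg_right _ (by positivity)
        apply mul_le_mul_of_nonneg_left hexp hM0.le
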